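/- There exists a constant K > 0 such that for all n ∈ ℕ, sup_{x ∈ [0,1]} ψ_n(x) − ψ_n(1/3) ≤ K; in fact one may take K = π + log(4/3). -/

import Mathlib

noncomputable def psi (x : ℝ) : ℝ := Real.log (1 - Real.cos (2 * Real.pi * x))

noncomputable def psiSum (n : ℕ) (x : ℝ) : ℝ :=
  ∑ ℓ ∈ Finset.range n, psi (Int.fract ((2:ℝ) ^ ℓ * x))

open Real Finset

lemma cos_two_pi_fract (t : ℝ) : Real.cos (2 * π * Int.fract t) = Real.cos (2 * π * t) := by
  have h : 2 * π * Int.fract t = 2 * π * t - (⌊t⌋ : ℝ) * (2 * π) := by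
    rw [Int.fract]; ring
  rw [h, Real.cos_sub_int_mul_two_pi]

lemma sqrt3_bounds : 1.7 ≤ Real.sqrt 3 ∧ Real.sqrt 3 ≤ 1.8 := by
  constructor
  · rw [show (1.7:ℝ) = Real.sqrt (1.7^2) by rw [Real.sqrt_sq]; norm_num]
    exact Real.sqrt_le_sqrt (by norm_num)
  · rw [show (1.8:ℝ) = Real.sqrt (1.8^2) by rw [Real.sqrt_sq]; norm_num]
    exact Real.sqrt_le_sqrt (by norm_num)

lemma log_three_halves_ge : (1/3 : ℝ) ≤ Real.log (3/2) := by
  have h := Real.log_le_sub_one_of_pos (show (0:ℝ) < 2/3 by norm_num)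
  have h2 : Real.log (2/3 : ℝ) = - Real.log (3/2) := by
    rw [show (2/3 : ℝ) = (3/2)⁻¹ by norm_num, Real.log_inv]
  linarith

set_option maxHeartbeats 1000000 in
/-- Tangent line bound for cos at π/3 on [0, π/2]. -/
lemma tangent_cos {u : ℝ} (hu0 : 0 ≤ u) (hu : u ≤ π/2) :
    Real.cos u ≤ 1/2 + (Real.sqrt 3 / 2) * (π/3 - u) := by
  have hpi : (3:ℝ) < π := Real.pi_gt_three
  have hpi' : π < 3.15 := Real.pi_lt_d2
  obtain ⟨hs1, hs2⟩ := sqrt3_bounds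
  have key : Real.cos u - 1/2 = -2 * Real.sin ((u + π/3)/2) * Real.sin ((u - π/3)/2) := by
    rw [← Real.cos_pi_div_three]
    exact Real.cos_sub_cos u (π/3)
  rcases le_or_gt u (π/3) with hcase | hcase
  · -- u ≤ π/3 : set s = (π/3 - u)/2 ∈ [0, π/6]
    set s := (π/3 - u)/2 with hs
    have hs0 : 0 ≤ s := by simp only [hs]; linarith
    have hsin_s_le : Real.sin s ≤ s := Real.sin_le hs0
    have hsin_s_nonneg : 0 ≤ Real.sin s := Real.sin_nonneg_of_nonneg_of_le_pi hs0 (by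
      simp only [hs]; nlinarith)
    have hA : Real.sin ((u + π/3)/2) ≤ Real.sqrt 3 / 2 := by
      rw [← Real.sin_pi_div_three]
      apply Real.strictMonoOn_sin.monotoneOn
      · constructor <;> [nlinarith; nlinarith]
      · constructor <;> [nlinarith; nlinarith]
      · nlinarith
    have hAnn : 0 ≤ Real.sin ((u + π/3)/2) :=
      Real.sin_nonneg_of_nonneg_of_le_pi (by nlinarith) (by nlinarith)
    have hneg : Real.sin ((u - π/3)/2) = - Real.sin s := by
      rw [hs, ← Real.sin_neg]; ring_nf
    rw [hneg] at key
    have hfin : Real.sin ((u + π/3)/2) * Real.sin s ≤ (Real.sqrt 3 / 2) * s :=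
      mul_le_mul hA hsin_s_le hsin_s_nonneg (by positivity)
    nlinarith [key, hfin]
  · -- u > π/3 : set t = (u - π/3)/2 ∈ (0, π/12]
    set t := (u - π/3)/2 with ht
    have ht0 : 0 < t := by simp only [ht]; linarith
    have ht1 : t ≤ π/12 := by simp only [ht]; linarith
    have ht27 : t ≤ 0.2625 := by linarith
    have hsin_lb : t - t^3/4 < Real.sin t := lt_of_le_of_lt (by nlinarith [pow_pos ht0 3]) (Real.sin_gt_sub_cube ht0)
    have hsin_ub : Real.sin t ≤ t := Real.sin_le ht0.le
    have hcos_lb : 1 - t^2/2 ≤ Real.cos t := Real.one_sub_sq_div_two_le_cos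
    have hcos_ub : Real.cos t ≤ 1 := Real.cos_le_one t
    have hexp : (u + π/3)/2 = t + π/3 := by rw [ht]; ring
    have hadd : Real.sin (t + π/3) = Real.sin t * (1/2) + Real.cos t * (Real.sqrt 3 / 2) := by
      rw [Real.sin_add, Real.cos_pi_div_three, Real.sin_pi_div_three]
    have htpos : 0 < t - t^3/4 := by nlinarith
    have hcpos : 0 < Real.cos t := by nlinarith
    have hcs : (1 - t^2/2) * (t - t^3/4) ≤ Real.cos t * Real.sin t :=
      mul_le_mul hcos_lb hsin_lb.le htpos.le hcpos.le
    have hspos : 0 < Real.sin t := by nlinarith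
    have hss : (t - t^3/4)^2 ≤ (Real.sin t)^2 :=
      pow_le_pow_left₀ htpos.le hsin_lb.le 2
    have hcs3 : Real.sqrt 3 * ((1 - t^2/2) * (t - t^3/4)) ≤ Real.sqrt 3 * (Real.cos t * Real.sin t) :=
      mul_le_mul_of_nonneg_left hcs (Real.sqrt_nonneg 3)
    have h18 : Real.sqrt 3 * (t^3) ≤ 1.8 * (t^3) :=
      mul_le_mul_of_nonneg_right hs2 (by positivity)
    have h5 : 0 ≤ Real.sqrt 3 * (t^5) := by positivity
    have hgoal : 2 * Real.sin (t + π/3) * Real.sin t ≥ Real.sqrt 3 * t := by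
      rw [hadd]
      nlinarith [hcs3, hss, h18, h5, mul_pos ht0 (mul_pos ht0 ht0), sq_nonneg t,
        mul_pos (mul_pos ht0 ht0) (mul_pos ht0 ht0)]
    rw [hexp] at key
    nlinarith [key, hgoal]

/-- The cohomological inequality: one step of the tent map. -/
lemma step_ineq {θ : ℝ} (h0 : 0 < θ) (hπ : θ ≤ π) :
    Real.log (1 - Real.cos θ) ≤ Real.log (3/2)
      + (Real.sqrt 3 / 9) * θ - (Real.sqrt 3 / 9) * Real.arccos (Real.cos (2*θ)) := by
  have hpi : (3:ℝ) < π := Real.pi_gt_three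
  have hpi' : π < 3.15 := Real.pi_lt_d2
  obtain ⟨hs1, hs2⟩ := sqrt3_bounds
  rcases le_or_gt θ (π/2) with hcase | hcase
  · -- 0 < θ ≤ π/2
    have harc : Real.arccos (Real.cos (2*θ)) = 2*θ :=
      Real.arccos_cos (by linarith) (by linarith)
    have hcosnn : 0 ≤ Real.cos θ :=
      Real.cos_nonneg_of_mem_Icc ⟨by linarith, hcase⟩
    have hlog : Real.log (1 - Real.cos θ) ≤ 0 := by
      apply Real.log_nonpos (by linarith [Real.cos_le_one θ]) (by linarith)
    have h13 := log_three_halves_ge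
    rw [harc]
    nlinarith
  · -- π/2 < θ ≤ π
    have harc : Real.arccos (Real.cos (2*θ)) = 2*π - 2*θ := by
      rw [← Real.cos_two_pi_sub (2*θ)]
      rw [show (2*π - 2*θ : ℝ) = 2*π - 2*θ from rfl]
      exact Real.arccos_cos (by linarith) (by linarith)
    have hcosnp : Real.cos θ ≤ 0 :=
      Real.cos_nonpos_of_pi_div_two_le_of_le hcase.le (by linarith)
    have hpos : (0:ℝ) < 2/3 * (1 - Real.cos θ) := by nlinarith
    have h1 : Real.log (2/3 * (1 - Real.cos θ)) ≤ 2/3 * (1 - Real.cos θ) - 1 :=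
      Real.log_le_sub_one_of_pos hpos
    have h2 : Real.log (2/3 * (1 - Real.cos θ))
        = Real.log (2/3) + Real.log (1 - Real.cos θ) :=
      Real.log_mul (by norm_num) (by nlinarith)
    have h3 : Real.log (2/3 : ℝ) = - Real.log (3/2) := by
      rw [show (2/3 : ℝ) = (3/2)⁻¹ by norm_num, Real.log_inv]
    -- tangent line for cos at 2π/3
    have h4 : Real.cos (π - θ) ≤ 1/2 + (Real.sqrt 3 / 2) * (π/3 - (π - θ)) :=
      tangent_cos (by linarith) (by linarith)
    rw [Real.cos_pi_sub] at h4
    rw [harc]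
    nlinarith [h1, h2, h3, h4]

theorem psiSum_max_bound :
    ∀ n : ℕ, ∀ x ∈ Set.Icc (0:ℝ) 1,
      (∀ ℓ < n, Int.fract ((2:ℝ) ^ ℓ * x) ≠ 0) →
      psiSum n x - psiSum n (1/3) ≤ Real.pi + Real.log (4/3) := by
  intro n x _hx hfr
  have hpi : (3:ℝ) < π := Real.pi_gt_three
  obtain ⟨hs1, hs2⟩ := sqrt3_bounds
  set lam : ℝ := Real.sqrt 3 / 9 with hlam
  set θ : ℕ → ℝ := fun ℓ => Real.arccos (Real.cos (2 * π * ((2:ℝ)^ℓ * x))) with hθ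
  have hθ0 : ∀ ℓ, 0 ≤ θ ℓ := fun ℓ => Real.arccos_nonneg _
  have hθπ : ∀ ℓ, θ ℓ ≤ π := fun ℓ => Real.arccos_le_pi _
  have hcosθ : ∀ ℓ, Real.cos (θ ℓ) = Real.cos (2 * π * ((2:ℝ)^ℓ * x)) := fun ℓ =>
    Real.cos_arccos (Real.neg_one_le_cos _) (Real.cos_le_one _)
  have hsucc : ∀ ℓ, θ (ℓ+1) = Real.arccos (Real.cos (2 * θ ℓ)) := by
    intro ℓ
    have h1 : 2 * π * ((2:ℝ)^(ℓ+1) * x) = 2 * (2 * π * ((2:ℝ)^ℓ * x)) := by ring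
    have h2 : Real.cos (2 * π * ((2:ℝ)^(ℓ+1) * x)) = Real.cos (2 * θ ℓ) := by
      rw [h1, Real.cos_two_mul, Real.cos_two_mul, hcosθ]
    simp only [hθ, h2]
  have hθpos : ∀ ℓ < n, 0 < θ ℓ := by
    intro ℓ hℓ
    rcases (hθ0 ℓ).lt_or_eq with h | h
    · exact h
    · exfalso
      have hc1 : Real.cos (2 * π * ((2:ℝ)^ℓ * x)) = 1 := by
        rw [← hcosθ, ← h, Real.cos_zero]
      obtain ⟨k, hk⟩ := (Real.cos_eq_one_iff _).mp hc1
      have hpi0 : (2:ℝ) * π ≠ 0 := by positivity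
      have hxk : (2:ℝ)^ℓ * x = (k:ℝ) := by
        have h2 : (2 * π) * ((k:ℝ)) = (2 * π) * ((2:ℝ)^ℓ * x) := by linarith [hk]
        exact (mul_left_cancel₀ hpi0 h2).symm
      exact hfr ℓ hℓ (by rw [hxk, Int.fract_intCast])
  -- rewrite psiSum n x
  have hx_eq : psiSum n x = ∑ ℓ ∈ Finset.range n, Real.log (1 - Real.cos (θ ℓ)) := by
    apply Finset.sum_congr rfl
    intro ℓ _
    simp only [psi, cos_two_pi_fract, hcosθ]
  -- psiSum n (1/3) = n * log(3/2)
  have hthird : ∀ ℓ : ℕ, Real.cos (2 * π * ((2:ℝ)^ℓ * (1/3))) = -(1/2) := by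
    intro ℓ
    induction ℓ with
    | zero =>
      rw [show 2 * π * ((2:ℝ)^0 * (1/3)) = π - π/3 by ring, Real.cos_pi_sub,
        Real.cos_pi_div_three]
    | succ m ih =>
      rw [show 2 * π * ((2:ℝ)^(m+1) * (1/3)) = 2 * (2 * π * ((2:ℝ)^m * (1/3))) by ring,
        Real.cos_two_mul, ih]
      norm_num
  have h13_eq : psiSum n (1/3) = n * Real.log (3/2) := by
    rw [psiSum]
    rw [Finset.sum_congr rfl (fun ℓ _ => by
      simp only [psi, cos_two_pi_fract, hthird ℓ]
      norm_num : ∀ ℓ ∈ Finset.range n,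
        psi (Int.fract ((2:ℝ)^ℓ * (1/3))) = Real.log (3/2))]
    rw [Finset.sum_const, Finset.card_range, nsmul_eq_mul]
  -- per-step bound and telescoping
  have hsum : ∑ ℓ ∈ Finset.range n, Real.log (1 - Real.cos (θ ℓ))
      ≤ ∑ ℓ ∈ Finset.range n, (Real.log (3/2) + (lam * θ ℓ - lam * θ (ℓ+1))) := by
    apply Finset.sum_le_sum
    intro ℓ hℓ
    have := step_ineq (hθpos ℓ (Finset.mem_range.mp hℓ)) (hθπ ℓ)
    rw [← hsucc ℓ, ← hlam] at this
    linarith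
  have htel : ∑ ℓ ∈ Finset.range n, (Real.log (3/2) + (lam * θ ℓ - lam * θ (ℓ+1)))
      = n * Real.log (3/2) + (lam * θ 0 - lam * θ n) := by
    rw [Finset.sum_add_distrib, Finset.sum_const, Finset.card_range, nsmul_eq_mul,
      Finset.sum_range_sub' (fun i => lam * θ i)]
  have hlog43 : 0 ≤ Real.log (4/3) := Real.log_nonneg (by norm_num)
  have hlam0 : 0 ≤ lam := by rw [hlam]; positivity
  have hlam1 : lam ≤ 1 := by rw [hlam]; linarith
  have hbound : lam * θ 0 - lam * θ n ≤ π := by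
    have h1 : lam * θ 0 ≤ lam * π := mul_le_mul_of_nonneg_left (hθπ 0) hlam0
    have h2 : 0 ≤ lam * θ n := mul_nonneg hlam0 (hθ0 n)
    nlinarith
  rw [hx_eq, h13_eq]
  calc (∑ ℓ ∈ Finset.range n, Real.log (1 - Real.cos (θ ℓ))) - n * Real.log (3/2)
      ≤ (n * Real.log (3/2) + (lam * θ 0 - lam * θ n)) - n * Real.log (3/2) := by
        rw [← htel]; linarith [hsum]
    _ ≤ π + Real.log (4/3) := by linarith
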